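/- Let $n\ge6$ and let $G$ be a 3-graph on $[n]$ with no isolated vertex, no two disjoint edges, that is left-compressed relative to the natural order. Then: (a) $\{1,2,i\}\in G$ for every $i\in\{3,\dots,n\}$; (b) every edge of $G$ contains vertex 1 or vertex 2; (c) the link of vertex 2 restricted to $\{3,\dots,n\}$, namely $L^+(2)=\{\{a,b\}\subseteq\{3,\dots,n\}: \{2,a,b\}\in G\}$, has no two disjoint edges, hence is empty, a triangle, or a star. -/
import Mathlib


open Finset

/-- Lagrangian polynomial: sum over edges of products of weights. -/
def lagPoly (G : Finset (Finset ℕ)) (x : ℕ → ℝ) : ℝ := ∑ e ∈ G, ∏ i ∈ e, x i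

/-- A feasible weight vector on `[n] = {1,…,n}`. -/
def IsFeasible (n : ℕ) (x : ℕ → ℝ) : Prop :=
  (∀ i, 0 ≤ x i) ∧ ∑ i ∈ Finset.Icc 1 n, x i = 1

/-- Lagrangian of a hypergraph on `[n]`. -/
noncomputable def lag (n : ℕ) (G : Finset (Finset ℕ)) : ℝ :=
  sSup {v : ℝ | ∃ x : ℕ → ℝ, IsFeasible n x ∧ lagPoly G x = v}

/-- `G` is an `r`-graph on the vertex set `{1,…,n}`. -/
def IsGraphOn (n r : ℕ) (G : Finset (Finset ℕ)) : Prop :=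
  ∀ e ∈ G, e ⊆ Finset.Icc 1 n ∧ e.card = r

/-- The compression `π_{ij}(G)`: each edge `f ∪ {j}` with `f` avoiding `i,j` and
`f ∪ {i} ∉ G` is replaced by `f ∪ {i}`. -/
def compress (G : Finset (Finset ℕ)) (i j : ℕ) : Finset (Finset ℕ) :=
  (G.filter fun e => ¬(j ∈ e ∧ i ∉ e ∧ insert i (e.erase j) ∉ G)) ∪
  ((G.filter fun e => j ∈ e ∧ i ∉ e ∧ insert i (e.erase j) ∉ G).image
    fun e => insert i (e.erase j))

/-- `G` contains `t` pairwise disjoint edges. -/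
def HasMatching (G : Finset (Finset ℕ)) (t : ℕ) : Prop :=
  ∃ M : Finset (Finset ℕ), M ⊆ G ∧ M.card = t ∧
    (M : Set (Finset ℕ)).Pairwise fun e f => Disjoint e f

/-- `G` contains a complete `r`-graph on `p` vertices. -/
def HasClique (G : Finset (Finset ℕ)) (p r : ℕ) : Prop :=
  ∃ S : Finset ℕ, S.card = p ∧ ∀ e ⊆ S, e.card = r → e ∈ G

/-- `G` is left-compressed relative to the natural order on `[n]`. -/
def LeftCompressed (n : ℕ) (G : Finset (Finset ℕ)) : Prop :=
  ∀ i j, 1 ≤ i → i < j → j ≤ n → ∀ e ∈ G, j ∈ e → i ∉ e → insert i (e.erase j) ∈ G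

/-- The link of vertex `2` restricted to `{3,…,n}`. -/
def L2 (n : ℕ) (G : Finset (Finset ℕ)) : Finset (Finset ℕ) :=
  ((Finset.Icc 3 n).powersetCard 2).filter fun A => insert 2 A ∈ G


lemma pair_eq_of_mem' {C : Finset ℕ} {a c : ℕ} (hcard : C.card = 2) (hac : a ≠ c)
    (ha : a ∈ C) (hc : c ∈ C) : C = {a, c} := by
  have hsub : ({a, c} : Finset ℕ) ⊆ C := by
    intro x hx
    simp only [mem_insert, mem_singleton] at hx
    rcases hx with rfl | rfl
    exacts [ha, hc]
  have hle : C.card ≤ ({a, c} : Finset ℕ).card := by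
    rw [hcard, Finset.card_pair hac]
  exact (Finset.eq_of_subset_of_card_le hsub hle).symm

lemma triple_eq_of_mem' {e : Finset ℕ} (hcard : e.card = 3) {x y z : ℕ}
    (hxy : x ≠ y) (hxz : x ≠ z) (hyz : y ≠ z)
    (hx : x ∈ e) (hy : y ∈ e) (hz : z ∈ e) : e = {x, y, z} := by
  have hsub : ({x, y, z} : Finset ℕ) ⊆ e := by
    intro t ht
    simp only [mem_insert, mem_singleton] at ht
    rcases ht with rfl | rfl | rfl
    exacts [hx, hy, hz]
  have hle : e.card ≤ ({x, y, z} : Finset ℕ).card := by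
    rw [hcard, Finset.card_insert_of_notMem (by simp [hxy, hxz]),
      Finset.card_insert_of_notMem (by simp [hyz]), Finset.card_singleton]
  exact (Finset.eq_of_subset_of_card_le hsub hle).symm

lemma star_or_triangle' (H : Finset (Finset ℕ))
    (hcard : ∀ A ∈ H, A.card = 2)
    (hint : ∀ A ∈ H, ∀ B ∈ H, ¬Disjoint A B) :
    H = ∅ ∨
      (∃ a b c : ℕ, a ≠ b ∧ a ≠ c ∧ b ≠ c ∧
        H = {({a,b} : Finset ℕ), {a,c}, {b,c}}) ∨
      (∃ v, ∀ A ∈ H, v ∈ A) := by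
  rcases H.eq_empty_or_nonempty with h | ⟨A, hA⟩
  · exact Or.inl h
  obtain ⟨a, b, hab, rfl⟩ := Finset.card_eq_two.mp (hcard A hA)
  by_cases h1 : ∀ E ∈ H, a ∈ E
  · exact Or.inr (Or.inr ⟨a, h1⟩)
  push_neg at h1
  obtain ⟨B, hB, haB⟩ := h1
  have hbB : b ∈ B := by
    obtain ⟨x, hx1, hx2⟩ := Finset.not_disjoint_iff.mp (hint _ hA _ hB)
    simp only [mem_insert, mem_singleton] at hx1
    rcases hx1 with rfl | rfl
    · exact absurd hx2 haB
    · exact hx2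
  obtain ⟨b', c', hbc, hBeq⟩ := Finset.card_eq_two.mp (hcard B hB)
  have hBpair : ∃ c, c ≠ b ∧ c ≠ a ∧ B = {b, c} := by
    subst hBeq
    simp only [mem_insert, mem_singleton] at hbB haB
    push_neg at haB
    rcases hbB with rfl | rfl
    · exact ⟨c', fun h => hbc h.symm, fun h => haB.2 h.symm, rfl⟩
    · exact ⟨b', fun h => hbc h, fun h => haB.1 h.symm, by rw [Finset.pair_comm]⟩
  obtain ⟨c, hcb, hca, rfl⟩ := hBpair
  by_cases h2 : ∀ E ∈ H, b ∈ E
  · exact Or.inr (Or.inr ⟨b, h2⟩)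
  push_neg at h2
  obtain ⟨C, hC, hbC⟩ := h2
  have haC : a ∈ C := by
    obtain ⟨x, hx1, hx2⟩ := Finset.not_disjoint_iff.mp (hint _ hA _ hC)
    simp only [mem_insert, mem_singleton] at hx1
    rcases hx1 with rfl | rfl
    · exact hx2
    · exact absurd hx2 hbC
  have hcC : c ∈ C := by
    obtain ⟨x, hx1, hx2⟩ := Finset.not_disjoint_iff.mp (hint _ hB _ hC)
    simp only [mem_insert, mem_singleton] at hx1
    rcases hx1 with rfl | rfl
    · exact absurd hx2 hbC
    · exact hx2
  have hac : a ≠ c := fun h => hca h.symm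
  have hCeq : C = {a, c} := pair_eq_of_mem' (hcard C hC) hac haC hcC
  refine Or.inr (Or.inl ⟨a, b, c, hab, hac, fun h => hcb h.symm, ?_⟩)
  apply Finset.Subset.antisymm
  · intro E hE
    simp only [mem_insert, mem_singleton]
    by_cases hbE : b ∈ E
    · obtain ⟨x, hx1, hx2⟩ := Finset.not_disjoint_iff.mp (hint _ hE _ hC)
      rw [hCeq] at hx2
      simp only [mem_insert, mem_singleton] at hx2
      rcases hx2 with rfl | rfl
      · left
        rw [pair_eq_of_mem' (hcard E hE) hab.symm hbE hx1, Finset.pair_comm]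
      · right; right
        exact pair_eq_of_mem' (hcard E hE) (fun h => hcb h.symm) hbE hx1
    · have haE : a ∈ E := by
        obtain ⟨x, hx1, hx2⟩ := Finset.not_disjoint_iff.mp (hint _ hE _ hA)
        simp only [mem_insert, mem_singleton] at hx2
        rcases hx2 with rfl | rfl
        · exact hx1
        · exact absurd hx1 hbE
      have hcE : c ∈ E := by
        obtain ⟨x, hx1, hx2⟩ := Finset.not_disjoint_iff.mp (hint _ hE _ hB)
        simp only [mem_insert, mem_singleton] at hx2
        rcases hx2 with rfl | rfl
        · exact absurd hx1 hbE
        · exact hx1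
      right; left
      exact pair_eq_of_mem' (hcard E hE) hac haE hcE
  · intro E hE
    simp only [mem_insert, mem_singleton] at hE
    rcases hE with rfl | rfl | rfl
    · exact hA
    · rw [← hCeq]; exact hC
    · exact hB

theorem intersecting_left_compressed_structure (n : ℕ) (hn : 6 ≤ n)
    (G : Finset (Finset ℕ)) (hG : IsGraphOn n 3 G)
    (hiso : ∀ v ∈ Finset.Icc 1 n, ∃ e ∈ G, v ∈ e)
    (hint : ∀ e ∈ G, ∀ f ∈ G, ¬Disjoint e f)
    (hc : LeftCompressed n G) :
    (∀ i ∈ Finset.Icc 3 n, ({1, 2, i} : Finset ℕ) ∈ G) ∧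
    (∀ e ∈ G, 1 ∈ e ∨ 2 ∈ e) ∧
    (∀ A ∈ L2 n G, ∀ B ∈ L2 n G, ¬Disjoint A B) ∧
    (L2 n G = ∅ ∨
      (∃ a b c : ℕ, a ≠ b ∧ a ≠ c ∧ b ≠ c ∧
        L2 n G = {({a,b} : Finset ℕ), {a,c}, {b,c}}) ∨
      (∃ v, ∀ A ∈ L2 n G, v ∈ A)) := by
  have partA : ∀ i ∈ Finset.Icc 3 n, ({1, 2, i} : Finset ℕ) ∈ G := by
    intro i hi
    rw [Finset.mem_Icc] at hi
    obtain ⟨hi3, hin⟩ := hi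
    obtain ⟨e, heG, hie⟩ := hiso i (Finset.mem_Icc.mpr ⟨by omega, hin⟩)
    have step1 : ∃ e1 ∈ G, 1 ∈ e1 ∧ i ∈ e1 := by
      by_cases h1 : 1 ∈ e
      · exact ⟨e, heG, h1, hie⟩
      · obtain ⟨hsub, hcard⟩ := hG e heG
        have hne : (e.erase i).Nonempty := by
          rw [← Finset.card_pos, Finset.card_erase_of_mem hie, hcard]; norm_num
        obtain ⟨j, hj⟩ := hne
        have hji : j ≠ i := Finset.ne_of_mem_erase hj
        have hje : j ∈ e := Finset.mem_of_mem_erase hj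
        have hjn : j ≤ n := (Finset.mem_Icc.mp (hsub hje)).2
        have hj1' : 1 ≤ j := (Finset.mem_Icc.mp (hsub hje)).1
        have hjne1 : j ≠ 1 := fun h => h1 (h ▸ hje)
        have hj1 : 1 < j := by omega
        refine ⟨insert 1 (e.erase j), hc 1 j le_rfl hj1 hjn e heG hje h1,
          Finset.mem_insert_self _ _, ?_⟩
        exact Finset.mem_insert_of_mem (Finset.mem_erase.mpr ⟨fun h => hji h.symm, hie⟩)
    obtain ⟨e1, he1G, h1e1, hie1⟩ := step1
    obtain ⟨hsub1, hcard1⟩ := hG e1 he1G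
    have hi1 : (1 : ℕ) ≠ i := by omega
    have hi2 : (2 : ℕ) ≠ i := by omega
    by_cases h2 : 2 ∈ e1
    · have := triple_eq_of_mem' hcard1 (by norm_num) hi1 hi2 h1e1 h2 hie1
      rw [← this]; exact he1G
    · have hne : ((e1.erase 1).erase i).Nonempty := by
        rw [← Finset.card_pos, Finset.card_erase_of_mem
          (Finset.mem_erase.mpr ⟨fun h => hi1 h.symm, hie1⟩),
          Finset.card_erase_of_mem h1e1, hcard1]; norm_num
      obtain ⟨j, hj⟩ := hne
      have hji : j ≠ i := Finset.ne_of_mem_erase hj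
      have hj1 : j ≠ 1 := Finset.ne_of_mem_erase (Finset.mem_of_mem_erase hj)
      have hje : j ∈ e1 := Finset.mem_of_mem_erase (Finset.mem_of_mem_erase hj)
      have hjn : j ≤ n := (Finset.mem_Icc.mp (hsub1 hje)).2
      have hj1' : 1 ≤ j := (Finset.mem_Icc.mp (hsub1 hje)).1
      have hjne2 : j ≠ 2 := fun h => h2 (h ▸ hje)
      have hj2 : 2 < j := by omega
      have he2G := hc 2 j (by norm_num) hj2 hjn e1 he1G hje h2
      obtain ⟨_, hcard2⟩ := hG _ he2G
      have h1m : (1 : ℕ) ∈ insert 2 (e1.erase j) :=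
        Finset.mem_insert_of_mem (Finset.mem_erase.mpr ⟨fun h => hj1 h.symm, h1e1⟩)
      have him : i ∈ insert 2 (e1.erase j) :=
        Finset.mem_insert_of_mem (Finset.mem_erase.mpr ⟨fun h => hji h.symm, hie1⟩)
      have := triple_eq_of_mem' hcard2 (by norm_num) hi1 hi2 h1m
        (Finset.mem_insert_self _ _) him
      rw [← this]; exact he2G
  have partB : ∀ e ∈ G, 1 ∈ e ∨ 2 ∈ e := by
    intro e heG
    by_contra hcon
    push_neg at hcon
    obtain ⟨h1e, h2e⟩ := hcon
    obtain ⟨hsub, hcard⟩ := hG e heG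
    have hesub : e ⊆ Finset.Icc 3 n := by
      intro x hx
      have hx' := Finset.mem_Icc.mp (hsub hx)
      have hx1 : x ≠ 1 := fun h => h1e (h ▸ hx)
      have hx2 : x ≠ 2 := fun h => h2e (h ▸ hx)
      exact Finset.mem_Icc.mpr ⟨by omega, hx'.2⟩
    have hne : (Finset.Icc 3 n \ e).Nonempty := by
      rw [← Finset.card_pos, Finset.card_sdiff_of_subset hesub, Nat.card_Icc, hcard]
      omega
    obtain ⟨i, hi⟩ := hne
    rw [Finset.mem_sdiff] at hi
    apply hint _ (partA i hi.1) e heG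
    rw [Finset.disjoint_left]
    intro x hx
    simp only [mem_insert, mem_singleton] at hx
    rcases hx with rfl | rfl | rfl
    exacts [h1e, h2e, hi.2]
  have partC : ∀ A ∈ L2 n G, ∀ B ∈ L2 n G, ¬Disjoint A B := by
    intro A hA B hB hd
    rw [L2, Finset.mem_filter, Finset.mem_powersetCard] at hA hB
    obtain ⟨⟨hAsub, hAcard⟩, hAG⟩ := hA
    obtain ⟨⟨hBsub, hBcard⟩, hBG⟩ := hB
    have h1B : (1 : ℕ) ∉ B := fun h => by
      have := Finset.mem_Icc.mp (hBsub h); omega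
    have h2B : (2 : ℕ) ∉ B := fun h => by
      have := Finset.mem_Icc.mp (hBsub h); omega
    have h1A : (1 : ℕ) ∉ A := fun h => by
      have := Finset.mem_Icc.mp (hAsub h); omega
    have h1iB : (1 : ℕ) ∉ insert 2 B := by
      simp only [mem_insert]
      push_neg
      exact ⟨by norm_num, h1B⟩
    have hkey := hc 1 2 le_rfl (by norm_num) (by omega) _ hBG
      (Finset.mem_insert_self _ _) h1iB
    rw [Finset.erase_insert h2B] at hkey
    apply hint _ hAG _ hkey
    rw [Finset.disjoint_left]
    intro x hx
    simp only [mem_insert] at hx ⊢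
    push_neg
    rcases hx with rfl | hx
    · exact ⟨by norm_num, h2B⟩
    · refine ⟨fun h => h1A (h ▸ hx), fun h => Finset.disjoint_left.mp hd hx h⟩
  refine ⟨partA, partB, partC, ?_⟩
  apply star_or_triangle' _ _ partC
  intro A hA
  rw [L2, Finset.mem_filter, Finset.mem_powersetCard] at hA
  exact hA.1.2
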